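/- Let g ∈ SU(2) and let Λ be a real 3×3 matrix such that g⁻¹·τ_i·g = Σ_{j=1}^{3} Λ_{ji}·τ_j for all i = 1, 2, 3. Then Σ_{i,j,k=1}^{3} ε_{ijk}·Λ_{il}·Λ_{jm}·Λ_{kn} = ε_{lmn} for all l, m, n (equivalently, det Λ = 1, so that Λ ∈ SO(3)). -/

import Mathlib

/- STATEMENT 8: if g ∈ SU(2) and Λ is a real 3×3 matrix with
g⁻¹·τ_i·g = Σ_j Λ_{ji}·τ_j for all i, then
Σ_{i,j,k} ε_{ijk}·Λ_{il}·Λ_{jm}·Λ_{kn} = ε_{lmn} for all l, m, n. -/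

/-- The totally antisymmetric Levi-Civita symbol on `Fin 3` (so that
`ε 0 1 2 = 1`, corresponding to ε_{123} = 1 in 1-based index notation). -/
noncomputable def ε (i j k : Fin 3) : ℝ :=
  (((j : ℕ) : ℝ) - ((i : ℕ) : ℝ)) * (((k : ℕ) : ℝ) - ((i : ℕ) : ℝ)) *
    (((k : ℕ) : ℝ) - ((j : ℕ) : ℝ)) / 2

/-- The Pauli matrices σ₁, σ₂, σ₃ (indexed by `Fin 3`). -/
noncomputable def σ : Fin 3 → Matrix (Fin 2) (Fin 2) ℂ :=
  ![!![0, 1; 1, 0], !![0, -Complex.I; Complex.I, 0], !![1, 0; 0, -1]]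

/-- The su(2) generators τ_i = −(i/2)·σ_i. -/
noncomputable def τ (i : Fin 3) : Matrix (Fin 2) (Fin 2) ℂ :=
  (-(Complex.I / 2)) • σ i

lemma τ_eq : τ = ![!![0, -(Complex.I/2); -(Complex.I/2), 0],
    !![0, -(1/2); 1/2, 0], !![-(Complex.I/2), 0; 0, Complex.I/2]] := by
  funext i
  fin_cases i <;> ext a b <;> fin_cases a <;> fin_cases b <;>
    simp [τ, σ] <;> ring_nf <;> simp [Complex.I_sq] <;> ring

/-- Trace pairing of the τ's. -/
lemma htr (a b : Fin 3) : (τ a * τ b).trace = if a = b then -(1/2) else 0 := by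
  fin_cases a <;> fin_cases b <;>
    simp [τ, σ, Matrix.trace_fin_two, Matrix.mul_apply, Fin.sum_univ_two, Complex.ext_iff] <;>
    norm_num

set_option maxHeartbeats 1000000 in
/-- Commutation relations of the τ's. -/
lemma hcomm (l m : Fin 3) : τ l * τ m - τ m * τ l = ∑ k, (ε l m k : ℂ) • τ k := by
  fin_cases l <;> fin_cases m <;>
    simp only [Fin.sum_univ_three] <;>
    (ext a b; fin_cases a <;> fin_cases b <;>
      norm_num [ε, τ_eq, Matrix.mul_fin_two, Matrix.smul_of, Matrix.smul_cons,
        Matrix.smul_empty, Matrix.cons_val] <;> (try ring_nf) <;>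
      (try norm_num [Complex.I_sq, Matrix.cons_val_two, Matrix.cons_val]))

lemma htr2 (i j q : Fin 3) :
    ((τ i * τ j - τ j * τ i) * τ q).trace = (ε i j q : ℂ) * (-(1/2)) := by
  rw [hcomm, Finset.sum_mul, Matrix.trace_sum]
  simp only [Matrix.smul_mul, Matrix.trace_smul, htr, smul_eq_mul, mul_ite, mul_zero]
  simp [Finset.sum_ite_eq']

lemma trace_pair (c : Fin 3 → ℂ) (q : Fin 3) :
    ((∑ a, c a • τ a) * τ q).trace = c q * (-(1/2)) := by
  rw [Finset.sum_mul, Matrix.trace_sum]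
  simp only [Matrix.smul_mul, Matrix.trace_smul, htr, smul_eq_mul, mul_ite, mul_zero]
  simp [Finset.sum_ite_eq']

lemma comm_expand (c d : Fin 3 → ℂ) :
    (∑ i, c i • τ i) * (∑ j, d j • τ j) - (∑ j, d j • τ j) * (∑ i, c i • τ i)
      = ∑ i, ∑ j, (c i * d j) • (τ i * τ j - τ j * τ i) := by
  rw [Finset.sum_mul_sum, Finset.sum_mul_sum]
  rw [Finset.sum_comm (f := fun j i => (d j • τ j) * (c i • τ i))]
  rw [← Finset.sum_sub_distrib]
  refine Finset.sum_congr rfl fun i _ => ?_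
  rw [← Finset.sum_sub_distrib]
  refine Finset.sum_congr rfl fun j _ => ?_
  rw [smul_mul_smul_comm, smul_mul_smul_comm, smul_sub, mul_comm (d j) (c i)]

theorem adjoint_rep_preserves_epsilon
    (g : Matrix (Fin 2) (Fin 2) ℂ) (hg : g ∈ Matrix.specialUnitaryGroup (Fin 2) ℂ)
    (Λ : Matrix (Fin 3) (Fin 3) ℝ)
    (hΛ : ∀ i, g⁻¹ * τ i * g = ∑ j, (Λ j i : ℂ) • τ j) :
    ∀ l m n, (∑ i, ∑ j, ∑ k, ε i j k * Λ i l * Λ j m * Λ k n) = ε l m n := by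
  have hdet : g.det = 1 := (Matrix.mem_specialUnitaryGroup_iff.mp hg).2
  have hu : IsUnit g.det := by rw [hdet]; exact isUnit_one
  have hgg : g * g⁻¹ = 1 := Matrix.mul_nonsing_inv g hu
  have cancel : ∀ X : Matrix (Fin 2) (Fin 2) ℂ, g * (g⁻¹ * X) = X := fun X => by
    rw [← Matrix.mul_assoc, hgg, Matrix.one_mul]
  have step : ∀ p q : Fin 3, (g⁻¹ * τ p * g) * (g⁻¹ * τ q * g) = g⁻¹ * (τ p * τ q) * g := by
    intro p q
    simp only [Matrix.mul_assoc, cancel]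
  have tconj : ∀ X : Matrix (Fin 2) (Fin 2) ℂ, (g⁻¹ * X * g).trace = X.trace := by
    intro X
    rw [Matrix.trace_mul_cycle, hgg, Matrix.one_mul]
  -- orthogonality
  have key1 : ∀ p q : Fin 3, (∑ a, (Λ a p : ℂ) * Λ a q) = if p = q then 1 else 0 := by
    intro p q
    have h1 : ((∑ a, (Λ a p : ℂ) • τ a) * (∑ b, (Λ b q : ℂ) • τ b)).trace
        = (τ p * τ q).trace := by
      rw [← hΛ p, ← hΛ q, step, tconj]
    rw [Finset.sum_mul_sum] at h1
    simp only [Matrix.trace_sum, smul_mul_smul_comm, Matrix.trace_smul, htr, smul_eq_mul,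
      mul_ite, mul_zero] at h1
    rw [Finset.sum_comm] at h1
    simp only [Finset.sum_ite_eq', Finset.mem_univ, if_true] at h1
    have h2 : (∑ a, (Λ a p : ℂ) * Λ a q) * (-(1/2)) = (if p = q then 1 else 0) * (-(1/2)) := by
      rw [Finset.sum_mul, h1]
      split <;> norm_num
    exact mul_right_cancel₀ (by norm_num) h2
  -- cofactor relation
  have key2 : ∀ l m q : Fin 3,
      (∑ i, ∑ j, (ε i j q : ℂ) * (Λ i l * Λ j m)) = ∑ k, (ε l m k : ℂ) * Λ q k := by
    intro l m q
    have hA2 : (∑ i, (Λ i l : ℂ) • τ i) * (∑ j, (Λ j m : ℂ) • τ j)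
        - (∑ j, (Λ j m : ℂ) • τ j) * (∑ i, (Λ i l : ℂ) • τ i)
        = ∑ k, (ε l m k : ℂ) • ∑ a, (Λ a k : ℂ) • τ a := by
      have fac : ∀ A B : Matrix (Fin 2) (Fin 2) ℂ,
          g⁻¹ * A * g - g⁻¹ * B * g = g⁻¹ * (A - B) * g := by
        intro A B; rw [Matrix.mul_sub, Matrix.sub_mul]
      rw [← hΛ l, ← hΛ m, step, step, fac, hcomm, Matrix.mul_sum, Matrix.sum_mul]
      refine Finset.sum_congr rfl fun k _ => ?_
      rw [Matrix.mul_smul, Matrix.smul_mul, hΛ]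
    have h3 := congrArg (fun M => (M * τ q).trace) hA2
    beta_reduce at h3
    rw [comm_expand] at h3
    have lhs3 : ((∑ i, ∑ j, ((Λ i l : ℂ) * Λ j m) • (τ i * τ j - τ j * τ i)) * τ q).trace
        = ∑ i, ∑ j, (ε i j q : ℂ) * (Λ i l * Λ j m) * (-(1/2)) := by
      rw [Finset.sum_mul, Matrix.trace_sum]
      refine Finset.sum_congr rfl fun i _ => ?_
      rw [Finset.sum_mul, Matrix.trace_sum]
      refine Finset.sum_congr rfl fun j _ => ?_
      rw [Matrix.smul_mul, Matrix.trace_smul, htr2, smul_eq_mul]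
      ring
    have rhs3 : ((∑ k, (ε l m k : ℂ) • ∑ a, (Λ a k : ℂ) • τ a) * τ q).trace
        = ∑ k, (ε l m k : ℂ) * Λ q k * (-(1/2)) := by
      rw [Finset.sum_mul, Matrix.trace_sum]
      refine Finset.sum_congr rfl fun k _ => ?_
      rw [Matrix.smul_mul, Matrix.trace_smul, trace_pair, smul_eq_mul]
      ring
    rw [lhs3, rhs3] at h3
    have h4 : (∑ i, ∑ j, (ε i j q : ℂ) * (Λ i l * Λ j m)) * (-(1/2))
        = (∑ k, (ε l m k : ℂ) * Λ q k) * (-(1/2)) := by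
      rw [Finset.sum_mul, Finset.sum_mul, ← h3]
      refine Finset.sum_congr rfl fun i _ => ?_
      rw [Finset.sum_mul]
    exact mul_right_cancel₀ (by norm_num) h4
  -- real versions
  have key1R : ∀ p q : Fin 3, (∑ a, Λ a p * Λ a q) = if p = q then 1 else 0 := by
    intro p q
    have := key1 p q
    have hc : ((∑ a, Λ a p * Λ a q : ℝ) : ℂ) = ((if p = q then 1 else 0 : ℝ) : ℂ) := by
      push_cast
      rw [this]
      split <;> simp
    exact_mod_cast hc
  have key2R : ∀ l m q : Fin 3,
      (∑ i, ∑ j, ε i j q * (Λ i l * Λ j m)) = ∑ k, ε l m k * Λ q k := by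
    intro l m q
    have := key2 l m q
    have hc : ((∑ i, ∑ j, ε i j q * (Λ i l * Λ j m) : ℝ) : ℂ)
        = ((∑ k, ε l m k * Λ q k : ℝ) : ℂ) := by
      push_cast
      exact this
    exact_mod_cast hc
  intro l m n
  calc ∑ i, ∑ j, ∑ k, ε i j k * Λ i l * Λ j m * Λ k n
      = ∑ k, ∑ i, ∑ j, ε i j k * Λ i l * Λ j m * Λ k n := by
        rw [show (∑ i, ∑ j, ∑ k, ε i j k * Λ i l * Λ j m * Λ k n)
            = ∑ i : Fin 3, ∑ k : Fin 3, ∑ j : Fin 3, ε i j k * Λ i l * Λ j m * Λ k n from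
          Finset.sum_congr rfl fun i _ => Finset.sum_comm]
        exact Finset.sum_comm
    _ = ∑ k, (∑ i, ∑ j, ε i j k * (Λ i l * Λ j m)) * Λ k n := by
        refine Finset.sum_congr rfl fun k _ => ?_
        rw [Finset.sum_mul]
        refine Finset.sum_congr rfl fun i _ => ?_
        rw [Finset.sum_mul]
        refine Finset.sum_congr rfl fun j _ => ?_
        ring
    _ = ∑ k, (∑ p, ε l m p * Λ k p) * Λ k n := by
        refine Finset.sum_congr rfl fun k _ => ?_
        rw [key2R]
    _ = ∑ k, ∑ p, ε l m p * Λ k p * Λ k n := by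
        refine Finset.sum_congr rfl fun k _ => ?_
        rw [Finset.sum_mul]
    _ = ∑ p, ∑ k, ε l m p * Λ k p * Λ k n := Finset.sum_comm
    _ = ∑ p, ε l m p * (∑ k, Λ k p * Λ k n) := by
        refine Finset.sum_congr rfl fun p _ => ?_
        rw [Finset.mul_sum]
        refine Finset.sum_congr rfl fun k _ => ?_
        ring
    _ = ∑ p, ε l m p * (if p = n then 1 else 0) := by
        refine Finset.sum_congr rfl fun p _ => ?_
        rw [key1R]
    _ = ε l m n := by simp [Finset.sum_ite_eq', mul_ite]
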